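/- For each fixed integer k ≥ 0, the ratio I(n,k)/I(n) tends to 0 as n → ∞, where I(n) is the number of involutions of {1,…,n} and I(n,k) is the number of involutions of {1,…,n} with exactly k fixed points. -/

import Mathlib

open Finset Filter

/-- The number of involutions of `{1,…,n}`. -/
noncomputable def invol (n : ℕ) : ℕ :=
  Nat.card {σ : Equiv.Perm (Fin n) // σ * σ = 1}

/-- The number of involutions of `{1,…,n}` with exactly `k` fixed points. -/
noncomputable def involFix (n k : ℕ) : ℕ :=
  Nat.card {σ : Equiv.Perm (Fin n) //
    σ * σ = 1 ∧ (Finset.univ.filter (fun i : Fin n => σ i = i)).card = k}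

section Aux
open Equiv
variable {n : ℕ}

lemma split_inv (σ : Perm (Fin n)) (hσ : σ * σ = 1) (a b : Fin n) (hb : σ a = b)
    (hne : b ≠ a) :
    (Equiv.swap a b * σ) * (Equiv.swap a b * σ) = 1 := by
  have hinv : ∀ x, σ (σ x) = x := fun x => by
    have := congrArg (fun f : Perm (Fin n) => f x) hσ; simpa using this
  have hba : σ b = a := by rw [← hb, hinv]
  refine Equiv.ext fun x => ?_
  simp only [Perm.mul_apply, Perm.one_apply]
  by_cases hxb : x = b
  · rw [hxb, hba, Equiv.swap_apply_left, hba, Equiv.swap_apply_left]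
  by_cases hxa : x = a
  · rw [hxa, hb, Equiv.swap_apply_right, hb, Equiv.swap_apply_right]
  · have h1 : σ x ≠ a := fun h => hxb (by rw [← hinv x, h, hb])
    have h2 : σ x ≠ b := fun h => hxa (by rw [← hinv x, h, hba])
    rw [Equiv.swap_apply_of_ne_of_ne h1 h2, hinv, Equiv.swap_apply_of_ne_of_ne hxa hxb]

lemma split_fix (σ : Perm (Fin n)) (hσ : σ * σ = 1) (a b : Fin n) (hb : σ a = b)
    (hne : b ≠ a) :
    (univ.filter (fun x : Fin n => (Equiv.swap a b * σ) x = x))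
      = insert a (insert b (univ.filter (fun x : Fin n => σ x = x))) := by
  have hinv : ∀ x, σ (σ x) = x := fun x => by
    have := congrArg (fun f : Perm (Fin n) => f x) hσ; simpa using this
  have hba : σ b = a := by rw [← hb, hinv]
  ext x
  simp only [mem_filter, mem_univ, true_and, mem_insert]
  simp only [Perm.mul_apply]
  constructor
  · intro h
    by_cases hxa : x = a
    · exact Or.inl hxa
    by_cases hxb : x = b
    · exact Or.inr (Or.inl hxb)
    · have h1 : σ x ≠ a := fun hc => hxb (by rw [← hinv x, hc, hb])
      have h2 : σ x ≠ b := fun hc => hxa (by rw [← hinv x, hc, hba])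
      rw [Equiv.swap_apply_of_ne_of_ne h1 h2] at h
      exact Or.inr (Or.inr h)
  · rintro (rfl | rfl | h)
    · rw [hb, Equiv.swap_apply_right]
    · rw [hba, Equiv.swap_apply_left]
    · have h1 : σ x ≠ a := fun hc => by
        rw [h] at hc
        exact hne (by rw [← hb, ← hc]; exact h)
      have h2 : σ x ≠ b := fun hc => by
        rw [h] at hc
        exact hne (by rw [← hc, ← h, hc]; exact hba)
      rw [Equiv.swap_apply_of_ne_of_ne h1 h2, h]

lemma key_card (n k : ℕ) :
    (((univ : Finset (Perm (Fin n))).filter (fun σ =>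
        σ * σ = 1 ∧ (univ.filter (fun i : Fin n => σ i = i)).card = k)).sigma
      (fun σ => univ.filter (fun i : Fin n => σ i ≠ i))).card
    ≤ (((univ : Finset (Perm (Fin n))).filter (fun τ =>
        τ * τ = 1 ∧ (univ.filter (fun i : Fin n => τ i = i)).card = k + 2)).sigma
      (fun τ => (univ.filter (fun i : Fin n => τ i = i)).offDiag)).card := by
  apply Finset.card_le_card_of_injOn
    (fun p => ⟨Equiv.swap p.2 (p.1 p.2) * p.1, (p.2, p.1 p.2)⟩)
  · rintro ⟨σ, i⟩ hp
    simp only [Finset.mem_coe, mem_sigma, mem_filter, mem_univ, true_and, ne_eq] at hp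
    obtain ⟨⟨hσ, hk⟩, hi⟩ := hp
    have hne : σ i ≠ i := hi
    have hfix := split_fix σ hσ i (σ i) rfl hne
    have h2 : σ (σ i) = i := by
      have := congrArg (fun f : Perm (Fin n) => f i) hσ; simpa using this
    have hanot : i ∉ (univ.filter (fun x : Fin n => σ x = x)) := by
      simp only [mem_filter, mem_univ, true_and]; exact fun h => hne h
    have hbnot : σ i ∉ (univ.filter (fun x : Fin n => σ x = x)) := by
      simp only [mem_filter, mem_univ, true_and]
      intro h
      exact hne (h.symm.trans h2)
    simp only [Finset.mem_coe, mem_sigma, mem_filter, mem_univ, true_and, mem_offDiag]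
    refine ⟨⟨split_inv σ hσ i (σ i) rfl hne, ?_⟩, ?_, ?_, fun h => hne h.symm⟩
    · rw [hfix, card_insert_of_notMem, card_insert_of_notMem hbnot, hk]
      simp only [mem_insert]
      push_neg
      exact ⟨fun h => hne h.symm, hanot⟩
    · rw [Perm.mul_apply, Equiv.swap_apply_right]
    · rw [Perm.mul_apply, h2, Equiv.swap_apply_left]
  · rintro ⟨σ, i⟩ hp ⟨σ', i'⟩ hp' heq
    have h1 : Equiv.swap i (σ i) * σ = Equiv.swap i' (σ' i') * σ' :=
      congrArg (fun p : (_ : Perm (Fin n)) × (Fin n × Fin n) => p.1) heq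
    have h2 : (i, σ i) = (i', σ' i') :=
      congrArg (fun p : (_ : Perm (Fin n)) × (Fin n × Fin n) => p.2) heq
    have hii : i = i' := congrArg Prod.fst h2
    have hss : σ i = σ' i' := congrArg Prod.snd h2
    subst hii
    rw [← hss] at h1
    have hs : σ = σ' := mul_left_cancel h1
    subst hs
    rfl

lemma involFix_eq (n k : ℕ) : involFix n k =
    (univ.filter (fun σ : Equiv.Perm (Fin n) =>
      σ * σ = 1 ∧ (univ.filter (fun i : Fin n => σ i = i)).card = k)).card := by
  rw [involFix, Nat.card_eq_fintype_card, Fintype.card_subtype]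

lemma invol_eq (n : ℕ) : invol n =
    (univ.filter (fun σ : Equiv.Perm (Fin n) => σ * σ = 1)).card := by
  rw [invol, Nat.card_eq_fintype_card, Fintype.card_subtype]

lemma key_ineq (n k : ℕ) :
    involFix n k * (n - k) ≤ involFix n (k + 2) * ((k + 2) * (k + 1)) := by
  have h := key_card n k
  rw [Finset.card_sigma, Finset.card_sigma] at h
  have hL : ∑ σ ∈ (univ : Finset (Perm (Fin n))).filter (fun σ =>
        σ * σ = 1 ∧ (univ.filter (fun i : Fin n => σ i = i)).card = k),
      (univ.filter (fun i : Fin n => σ i ≠ i)).card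
      = involFix n k * (n - k) := by
    have hcount : ∀ σ ∈ (univ : Finset (Perm (Fin n))).filter (fun σ =>
        σ * σ = 1 ∧ (univ.filter (fun i : Fin n => σ i = i)).card = k),
        (univ.filter (fun i : Fin n => σ i ≠ i)).card = n - k := by
      intro σ hσ
      simp only [mem_filter, mem_univ, true_and] at hσ
      have := Finset.card_filter_add_card_filter_not
        (s := (univ : Finset (Fin n))) (p := fun i => σ i = i)
      rw [hσ.2] at this
      simp only [Finset.card_univ, Fintype.card_fin] at this
      simp only [ne_eq]
      omega
    rw [Finset.sum_congr rfl hcount, Finset.sum_const, smul_eq_mul, involFix_eq]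
  have hR : ∑ τ ∈ (univ : Finset (Perm (Fin n))).filter (fun τ =>
        τ * τ = 1 ∧ (univ.filter (fun i : Fin n => τ i = i)).card = k + 2),
      ((univ.filter (fun i : Fin n => τ i = i)).offDiag).card
      = involFix n (k + 2) * ((k + 2) * (k + 1)) := by
    have hcount : ∀ τ ∈ (univ : Finset (Perm (Fin n))).filter (fun τ =>
        τ * τ = 1 ∧ (univ.filter (fun i : Fin n => τ i = i)).card = k + 2),
        ((univ.filter (fun i : Fin n => τ i = i)).offDiag).card = (k + 2) * (k + 1) := by
      intro τ hτ
      simp only [mem_filter, mem_univ, true_and] at hτ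
      rw [Finset.offDiag_card, hτ.2]
      ring_nf
      omega
    rw [Finset.sum_congr rfl hcount, Finset.sum_const, smul_eq_mul, involFix_eq]
  rw [hL, hR] at h
  exact h

lemma involFix_le_invol (n k : ℕ) : involFix n k ≤ invol n := by
  rw [involFix_eq, invol_eq]
  apply Finset.card_le_card
  intro σ hσ
  simp only [mem_filter, mem_univ, true_and] at *
  exact hσ.1

lemma invol_pos (n : ℕ) : 0 < invol n := by
  rw [invol_eq]
  refine Finset.card_pos.mpr ⟨1, ?_⟩
  simp

end Aux

/-- For each fixed `k`, the proportion of involutions of `{1,…,n}` with exactly `k` fixed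
points tends to `0` (the `λ = ∞` situation). -/
theorem involutions_fixed_points_ratio (k : ℕ) :
    Tendsto (fun n : ℕ => (involFix n k : ℝ) / (invol n : ℝ)) atTop (nhds 0) := by
  have hg : Tendsto (fun n : ℕ => ((k+2)*(k+1) : ℝ) / ((n : ℝ) - k)) atTop (nhds 0) := by
    apply Tendsto.div_atTop tendsto_const_nhds
    exact tendsto_atTop_add_const_right _ _ tendsto_natCast_atTop_atTop
  refine squeeze_zero' ?_ ?_ hg
  · filter_upwards with n
    positivity
  · filter_upwards [eventually_ge_atTop (k + 1)] with n hn
    have hpos : (0 : ℝ) < invol n := by exact_mod_cast invol_pos n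
    have hnk : (0 : ℝ) < (n : ℝ) - k := by
      have : (k : ℝ) + 1 ≤ n := by exact_mod_cast hn
      linarith
    rw [div_le_div_iff₀ hpos hnk]
    have h1 : (involFix n k : ℝ) * (n - k) ≤ (involFix n (k+2) : ℝ) * ((k+2)*(k+1)) := by
      have := key_ineq n k
      have hcast : ((involFix n k * (n - k) : ℕ) : ℝ) ≤ ((involFix n (k+2) * ((k+2)*(k+1)) : ℕ) : ℝ) := by
        exact_mod_cast this
      push_cast at hcast
      rwa [Nat.cast_sub (by omega)] at hcast
    have h2 : (involFix n (k+2) : ℝ) ≤ invol n := by exact_mod_cast involFix_le_invol n (k+2)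
    calc (involFix n k : ℝ) * ((n : ℝ) - k) ≤ (involFix n (k+2) : ℝ) * ((k+2)*(k+1)) := h1
      _ ≤ (invol n : ℝ) * ((k+2)*(k+1)) :=
        mul_le_mul_of_nonneg_right h2 (by positivity)
      _ = (k+2)*(k+1) * (invol n : ℝ) := by ring
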